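/- If the family θ satisfies the fixed-point property, then the value function is the optimal value of the single-agent control problem against the equilibrium mean-field flow: for every t ∈ {1,…,T}, z ∈ PMF X and x ∈ X, V_t(z,x) = sup over all Markov policies σ of J_t^{σ}(z,x), and this supremum is attained by the policy θ. -/

import Mathlib

open scoped BigOperators ENNReal

section MFG

variable {X A : Type*} [Fintype X] [Fintype A] [Nonempty X] [Nonempty A]

/-- McKean–Vlasov update: `phi τ z γ (y) = ∑ x, ∑ a, z x * γ x a * τ x a z y`. -/
noncomputable def phi (τ : X → A → PMF X → PMF X) (z : PMF X) (γ : X → PMF A) : PMF X :=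
  z.bind fun x => (γ x).bind fun a => τ x a z

/-- Backward-recursive value function with `V (T+1) = 0`. -/
noncomputable def V (τ : X → A → PMF X → PMF X) (R : X → A → PMF X → ℝ) (δ : ℝ)
    (T : ℕ) (θ : ℕ → PMF X → X → PMF A) (t : ℕ) (z : PMF X) (x : X) : ℝ :=
  if h : T < t then 0
  else
    ∑ a : A, ((θ t z x) a).toReal *
      (R x a z + δ * ∑ x' : X, ((τ x a z) x').toReal *
        V τ R δ T θ (t + 1) (phi τ z (θ t z)) x')
termination_by T + 1 - t
decreasing_by omega

/-- Action-value function `Q_t(z,x,a,γ)`. -/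
noncomputable def Q (τ : X → A → PMF X → PMF X) (R : X → A → PMF X → ℝ) (δ : ℝ)
    (T : ℕ) (θ : ℕ → PMF X → X → PMF A) (t : ℕ) (z : PMF X) (x : X) (a : A)
    (γ : X → PMF A) : ℝ :=
  R x a z + δ * ∑ x' : X, ((τ x a z) x').toReal * V τ R δ T θ (t + 1) (phi τ z γ) x'

/-- The fixed-point property of the equilibrium generating family `θ`. -/
def IsFixedPoint (τ : X → A → PMF X → PMF X) (R : X → A → PMF X → ℝ) (δ : ℝ)
    (T : ℕ) (θ : ℕ → PMF X → X → PMF A) : Prop :=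
  ∀ t, 1 ≤ t → t ≤ T → ∀ (z : PMF X) (x : X) (π : PMF A),
    ∑ a : A, ((θ t z x) a).toReal * Q τ R δ T θ t z x a (θ t z) ≥
      ∑ a : A, (π a).toReal * Q τ R δ T θ t z x a (θ t z)

/-- Mean-field flow generated by the policy `θ`, started from `z` at time `t`:
`flow τ θ t z n = z_{t+n}`. -/
noncomputable def flow (τ : X → A → PMF X → PMF X) (θ : ℕ → PMF X → X → PMF A)
    (t : ℕ) (z : PMF X) : ℕ → PMF X
  | 0 => z
  | n + 1 => phi τ (flow τ θ t z n) (θ (t + n) (flow τ θ t z n))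

/-- Individual state trajectory: `traj x xs 0 = x`, `traj x xs (i+1) = xs i`. -/
def traj {n : ℕ} (x : X) (xs : Fin n → X) : Fin (n + 1) → X := Fin.cases x xs

/-- Path-sum expected discounted return `J_t^σ(z,x)` of the Markov policy `σ`,
against the mean-field flow generated by `θ` started from `z` at time `t`. -/
noncomputable def J (τ : X → A → PMF X → PMF X) (R : X → A → PMF X → ℝ) (δ : ℝ)
    (T : ℕ) (θ σ : ℕ → PMF X → X → PMF A) (t : ℕ) (z : PMF X) (x : X) : ℝ :=
  ∑ as : Fin (T - t + 1) → A, ∑ xs : Fin (T - t) → X,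
    ((∏ k : Fin (T - t + 1),
        ((σ (t + (k : ℕ)) (flow τ θ t z (k : ℕ)) (traj x xs k)) (as k)).toReal) *
      (∏ k : Fin (T - t),
        ((τ (traj x xs k.castSucc) (as k.castSucc) (flow τ θ t z (k : ℕ)))
          (traj x xs k.succ)).toReal)) *
    (∑ k : Fin (T - t + 1),
      δ ^ (k : ℕ) * R (traj x xs k) (as k) (flow τ θ t z (k : ℕ)))

/-! ### Auxiliary machinery -/

lemma PMF.sum_toReal_eq_one {B : Type*} [Fintype B] (p : PMF B) :
    ∑ b, (p b).toReal = 1 := by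
  rw [← ENNReal.toReal_sum (fun b _ => p.apply_ne_top b), ← tsum_fintype (L := SummationFilter.unconditional _), p.tsum_coe,
    ENNReal.toReal_one]

lemma sum_pi_fin_succ {B : Type*} [Fintype B] {n : ℕ} (f : (Fin (n + 1) → B) → ℝ) :
    ∑ g : Fin (n + 1) → B, f g = ∑ b : B, ∑ g : Fin n → B, f (Fin.cons b g) := by
  rw [← Equiv.sum_comp (Fin.consEquiv (fun _ => B)) f, Fintype.sum_prod_type]
  rfl

@[simp] lemma traj_zero {n : ℕ} (x : X) (xs : Fin n → X) : traj x xs 0 = x := rfl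

@[simp] lemma traj_succ {n : ℕ} (x : X) (xs : Fin n → X) (k : Fin n) :
    traj x xs k.succ = xs k := by
  simp [traj]

lemma traj_cons {n : ℕ} (x x' : X) (xs : Fin n → X) :
    traj x (Fin.cons x' xs) = Fin.cons x (traj x' xs) := rfl

lemma flow_shift (τ : X → A → PMF X → PMF X) (θ : ℕ → PMF X → X → PMF A)
    (t : ℕ) (z : PMF X) : ∀ k, flow τ θ t z (k + 1) = flow τ θ (t + 1) (phi τ z (θ t z)) k := by
  intro k
  induction k with
  | zero => simp [flow]
  | succ k ih =>
      show phi τ (flow τ θ t z (k + 1)) (θ (t + (k + 1)) (flow τ θ t z (k + 1))) = _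
      rw [ih]
      show _ = phi τ (flow τ θ (t + 1) (phi τ z (θ t z)) k)
        (θ ((t + 1) + k) (flow τ θ (t + 1) (phi τ z (θ t z)) k))
      have : t + (k + 1) = (t + 1) + k := by omega
      rw [this]

/-- `J` with the horizon length `n` made explicit (so that `J = Jaux (T - t) t`). -/
noncomputable def Jaux (τ : X → A → PMF X → PMF X) (R : X → A → PMF X → ℝ) (δ : ℝ)
    (θ σ : ℕ → PMF X → X → PMF A) (n t : ℕ) (z : PMF X) (x : X) : ℝ :=
  ∑ as : Fin (n + 1) → A, ∑ xs : Fin n → X,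
    ((∏ k : Fin (n + 1),
        ((σ (t + (k : ℕ)) (flow τ θ t z (k : ℕ)) (traj x xs k)) (as k)).toReal) *
      (∏ k : Fin n,
        ((τ (traj x xs k.castSucc) (as k.castSucc) (flow τ θ t z (k : ℕ)))
          (traj x xs k.succ)).toReal)) *
    (∑ k : Fin (n + 1),
      δ ^ (k : ℕ) * R (traj x xs k) (as k) (flow τ θ t z (k : ℕ)))

lemma J_eq_Jaux (τ : X → A → PMF X → PMF X) (R : X → A → PMF X → ℝ) (δ : ℝ)
    (T : ℕ) (θ σ : ℕ → PMF X → X → PMF A) (t : ℕ) (z : PMF X) (x : X) :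
    J τ R δ T θ σ t z x = Jaux τ R δ θ σ (T - t) t z x := rfl

section Split

variable (τ : X → A → PMF X → PMF X) (R : X → A → PMF X → ℝ) (δ : ℝ)
  (θ σ : ℕ → PMF X → X → PMF A) (n t : ℕ) (z : PMF X) (x x' : X) (a : A)
  (as : Fin (n + 1) → A) (xs : Fin n → X)

lemma P1_cons :
    (∏ k : Fin (n + 1 + 1),
      ((σ (t + (k : ℕ)) (flow τ θ t z (k : ℕ)) (traj x (Fin.cons x' xs) k))
        ((Fin.cons a as : Fin (n+1+1) → A) k)).toReal)
    = ((σ t z x) a).toReal *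
      ∏ k : Fin (n + 1),
        ((σ ((t + 1) + (k : ℕ)) (flow τ θ (t + 1) (phi τ z (θ t z)) (k : ℕ))
          (traj x' xs k)) (as k)).toReal := by
  rw [Fin.prod_univ_succ]
  congr 1
  refine Finset.prod_congr rfl fun k _ => ?_
  rw [Fin.val_succ, flow_shift]
  have h : t + ((k : ℕ) + 1) = (t + 1) + (k : ℕ) := by omega
  rw [h, traj_cons, Fin.cons_succ, Fin.cons_succ]

lemma P2_cons :
    (∏ k : Fin (n + 1),
      ((τ (traj x (Fin.cons x' xs) k.castSucc) ((Fin.cons a as : Fin (n+1+1) → A) k.castSucc)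
          (flow τ θ t z (k : ℕ))) (traj x (Fin.cons x' xs) k.succ)).toReal)
    = ((τ x a z) x').toReal *
      ∏ k : Fin n,
        ((τ (traj x' xs k.castSucc) (as k.castSucc)
          (flow τ θ (t + 1) (phi τ z (θ t z)) (k : ℕ))) (traj x' xs k.succ)).toReal := by
  rw [Fin.prod_univ_succ]
  congr 1
  refine Finset.prod_congr rfl fun k _ => ?_
  rw [Fin.val_succ, flow_shift, traj_cons, ← Fin.succ_castSucc, Fin.cons_succ, Fin.cons_succ,
    Fin.cons_succ]

lemma S_cons :
    (∑ k : Fin (n + 1 + 1),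
      δ ^ (k : ℕ) * R (traj x (Fin.cons x' xs) k) ((Fin.cons a as : Fin (n+1+1) → A) k) (flow τ θ t z (k : ℕ)))
    = R x a z + δ *
      ∑ k : Fin (n + 1),
        δ ^ (k : ℕ) * R (traj x' xs k) (as k) (flow τ θ (t + 1) (phi τ z (θ t z)) (k : ℕ)) := by
  rw [Fin.sum_univ_succ]
  congr 1
  · simp [flow]
  · rw [Finset.mul_sum]
    refine Finset.sum_congr rfl fun k _ => ?_
    rw [Fin.val_succ, flow_shift, traj_cons, Fin.cons_succ, Fin.cons_succ, pow_succ]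
    ring

end Split

lemma expectation_add {ι κ : Type*} [Fintype ι] [Fintype κ] (p : ι → κ → ℝ)
    (hp : ∑ i, ∑ j, p i j = 1) (c d : ℝ) (s : ι → κ → ℝ) :
    ∑ i, ∑ j, p i j * (c + d * s i j) = c + d * ∑ i, ∑ j, p i j * s i j := by
  have h : ∀ i j, p i j * (c + d * s i j) = p i j * c + d * (p i j * s i j) := by
    intros; ring
  simp only [h, Finset.sum_add_distrib, ← Finset.sum_mul, ← Finset.mul_sum, hp, one_mul]

lemma outer_collect {κ : Type*} [Fintype κ] (q : κ → ℝ) (hq : ∑ j, q j = 1)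
    (c0 c d : ℝ) (s : κ → ℝ) :
    ∑ j, (c0 * q j) * (c + d * s j) = c0 * (c + d * ∑ j, q j * s j) := by
  have h : ∀ j, (c0 * q j) * (c + d * s j) = (c0 * c) * q j + (c0 * d) * (q j * s j) :=
    fun j => by ring
  simp only [h, Finset.sum_add_distrib, ← Finset.mul_sum, hq, mul_one]
  ring

/-- Master splitting identity: peeling off the first action and state. -/
lemma split_core (τ : X → A → PMF X → PMF X) (θ σ : ℕ → PMF X → X → PMF A)
    (n t : ℕ) (z : PMF X) (x : X)
    (G : (Fin (n + 1 + 1) → A) → (Fin (n + 1) → X) → ℝ) :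
    ∑ as : Fin (n + 1 + 1) → A, ∑ xs : Fin (n + 1) → X,
      ((∏ k : Fin (n + 1 + 1),
          ((σ (t + (k : ℕ)) (flow τ θ t z (k : ℕ)) (traj x xs k)) (as k)).toReal) *
        (∏ k : Fin (n + 1),
          ((τ (traj x xs k.castSucc) (as k.castSucc) (flow τ θ t z (k : ℕ)))
            (traj x xs k.succ)).toReal)) * G as xs
    = ∑ a : A, ∑ x' : X, (((σ t z x) a).toReal * ((τ x a z) x').toReal) *
        ∑ as : Fin (n + 1) → A, ∑ xs : Fin n → X,
          ((∏ k : Fin (n + 1),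
              ((σ ((t + 1) + (k : ℕ)) (flow τ θ (t + 1) (phi τ z (θ t z)) (k : ℕ))
                (traj x' xs k)) (as k)).toReal) *
            (∏ k : Fin n,
              ((τ (traj x' xs k.castSucc) (as k.castSucc)
                (flow τ θ (t + 1) (phi τ z (θ t z)) (k : ℕ))) (traj x' xs k.succ)).toReal)) *
          G (Fin.cons a as) (Fin.cons x' xs) := by
  rw [sum_pi_fin_succ]
  refine Finset.sum_congr rfl fun a _ => ?_
  have h1 : ∀ as : Fin (n + 1) → A,
      (∑ xs : Fin (n + 1) → X,
        ((∏ k : Fin (n + 1 + 1),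
            ((σ (t + (k : ℕ)) (flow τ θ t z (k : ℕ)) (traj x xs k))
              ((Fin.cons a as : Fin (n+1+1) → A) k)).toReal) *
          (∏ k : Fin (n + 1),
            ((τ (traj x xs k.castSucc) ((Fin.cons a as : Fin (n+1+1) → A) k.castSucc)
              (flow τ θ t z (k : ℕ))) (traj x xs k.succ)).toReal)) *
          G (Fin.cons a as) xs)
      = ∑ x' : X, ∑ xs : Fin n → X,
          (((σ t z x) a).toReal * ((τ x a z) x').toReal) *
          (((∏ k : Fin (n + 1),
              ((σ ((t + 1) + (k : ℕ)) (flow τ θ (t + 1) (phi τ z (θ t z)) (k : ℕ))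
                (traj x' xs k)) (as k)).toReal) *
            (∏ k : Fin n,
              ((τ (traj x' xs k.castSucc) (as k.castSucc)
                (flow τ θ (t + 1) (phi τ z (θ t z)) (k : ℕ))) (traj x' xs k.succ)).toReal)) *
          G (Fin.cons a as) (Fin.cons x' xs)) := by
    intro as
    rw [sum_pi_fin_succ]
    refine Finset.sum_congr rfl fun x' _ => Finset.sum_congr rfl fun xs _ => ?_
    rw [P1_cons, P2_cons]
    ring
  simp only [h1]
  rw [Finset.sum_comm]
  refine Finset.sum_congr rfl fun x' _ => ?_
  rw [Finset.mul_sum]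
  refine Finset.sum_congr rfl fun as _ => ?_
  rw [Finset.mul_sum]

lemma mass (τ : X → A → PMF X → PMF X) (θ σ : ℕ → PMF X → X → PMF A) :
    ∀ n t (z : PMF X) (x : X),
      ∑ as : Fin (n + 1) → A, ∑ xs : Fin n → X,
        (∏ k : Fin (n + 1),
          ((σ (t + (k : ℕ)) (flow τ θ t z (k : ℕ)) (traj x xs k)) (as k)).toReal) *
        (∏ k : Fin n,
          ((τ (traj x xs k.castSucc) (as k.castSucc) (flow τ θ t z (k : ℕ)))
            (traj x xs k.succ)).toReal) = 1 := by
  intro n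
  induction n with
  | zero =>
      intro t z x
      rw [sum_pi_fin_succ]
      simp [flow]
      exact PMF.sum_toReal_eq_one _
  | succ n ih =>
      intro t z x
      have h := split_core τ θ σ n t z x (fun _ _ => (1 : ℝ))
      simp only [mul_one] at h
      rw [h]
      simp only [ih]
      simp only [mul_one, ← Finset.mul_sum, PMF.sum_toReal_eq_one]

/-- `Jaux` at horizon `0`. -/
lemma Jaux_zero (τ : X → A → PMF X → PMF X) (R : X → A → PMF X → ℝ) (δ : ℝ)
    (θ σ : ℕ → PMF X → X → PMF A) (t : ℕ) (z : PMF X) (x : X) :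
    Jaux τ R δ θ σ 0 t z x = ∑ a : A, ((σ t z x) a).toReal * R x a z := by
  rw [Jaux, sum_pi_fin_succ]
  simp [flow]

/-- One-step recursion for `Jaux`. -/
lemma Jaux_succ (τ : X → A → PMF X → PMF X) (R : X → A → PMF X → ℝ) (δ : ℝ)
    (θ σ : ℕ → PMF X → X → PMF A) (n t : ℕ) (z : PMF X) (x : X) :
    Jaux τ R δ θ σ (n + 1) t z x =
      ∑ a : A, ((σ t z x) a).toReal *
        (R x a z + δ * ∑ x' : X, ((τ x a z) x').toReal *
          Jaux τ R δ θ σ n (t + 1) (phi τ z (θ t z)) x') := by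
  rw [Jaux, split_core τ θ σ n t z x]
  simp only [S_cons]
  calc
    ∑ a : A, ∑ x' : X, (((σ t z x) a).toReal * ((τ x a z) x').toReal) *
        ∑ as : Fin (n + 1) → A, ∑ xs : Fin n → X,
          ((∏ k : Fin (n + 1),
              ((σ ((t + 1) + (k : ℕ)) (flow τ θ (t + 1) (phi τ z (θ t z)) (k : ℕ))
                (traj x' xs k)) (as k)).toReal) *
            (∏ k : Fin n,
              ((τ (traj x' xs k.castSucc) (as k.castSucc)
                (flow τ θ (t + 1) (phi τ z (θ t z)) (k : ℕ))) (traj x' xs k.succ)).toReal)) *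
          (R x a z + δ *
            ∑ k : Fin (n + 1), δ ^ (k : ℕ) * R (traj x' xs k) (as k)
              (flow τ θ (t + 1) (phi τ z (θ t z)) (k : ℕ)))
      = ∑ a : A, ∑ x' : X, (((σ t z x) a).toReal * ((τ x a z) x').toReal) *
          (R x a z + δ * Jaux τ R δ θ σ n (t + 1) (phi τ z (θ t z)) x') := by
        refine Finset.sum_congr rfl fun a _ => Finset.sum_congr rfl fun x' _ => ?_
        congr 1
        rw [Jaux]
        exact expectation_add _ (mass τ θ σ n (t + 1) (phi τ z (θ t z)) x') _ _ _
    _ = _ := by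
        refine Finset.sum_congr rfl fun a _ => ?_
        exact outer_collect _ (PMF.sum_toReal_eq_one (τ x a z)) _ _ _ _

lemma V_eq_and_le (τ : X → A → PMF X → PMF X) (R : X → A → PMF X → ℝ) (δ : ℝ)
    (hδ0 : 0 < δ) (T : ℕ) (θ : ℕ → PMF X → X → PMF A) (hθ : IsFixedPoint τ R δ T θ) :
    ∀ n t, 1 ≤ t → t + n = T → ∀ (z : PMF X) (x : X),
      V τ R δ T θ t z x = Jaux τ R δ θ θ n t z x ∧
      ∀ σ : ℕ → PMF X → X → PMF A, Jaux τ R δ θ σ n t z x ≤ V τ R δ T θ t z x := by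
  intro n
  induction n with
  | zero =>
      intro t ht1 htn z x
      have hstop : ∀ (z' : PMF X) (x' : X), V τ R δ T θ (t + 1) z' x' = 0 := by
        intro z' x'
        rw [V, dif_pos (by omega)]
      have hQ : ∀ (a : A) (γ : X → PMF A), Q τ R δ T θ t z x a γ = R x a z := by
        intro a γ
        rw [Q]
        simp [hstop]
      have hV : V τ R δ T θ t z x
          = ∑ a : A, ((θ t z x) a).toReal * Q τ R δ T θ t z x a (θ t z) := by
        rw [V, dif_neg (by omega)]
        rfl
      constructor
      · rw [hV, Jaux_zero]
        exact Finset.sum_congr rfl fun a _ => by rw [hQ]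
      · intro σ
        rw [hV, Jaux_zero]
        calc ∑ a : A, ((σ t z x) a).toReal * R x a z
            = ∑ a : A, ((σ t z x) a).toReal * Q τ R δ T θ t z x a (θ t z) :=
              Finset.sum_congr rfl fun a _ => by rw [hQ]
          _ ≤ _ := hθ t ht1 (by omega) z x (σ t z x)
  | succ n ih =>
      intro t ht1 htn z x
      have h1 := fun (z' : PMF X) (x' : X) => ih (t + 1) (by omega) (by omega) z' x'
      have hV : V τ R δ T θ t z x
          = ∑ a : A, ((θ t z x) a).toReal * Q τ R δ T θ t z x a (θ t z) := by
        rw [V, dif_neg (by omega)]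
        rfl
      have hQ : ∀ a : A, Q τ R δ T θ t z x a (θ t z)
          = R x a z + δ * ∑ x' : X, ((τ x a z) x').toReal *
              Jaux τ R δ θ θ n (t + 1) (phi τ z (θ t z)) x' := by
        intro a
        rw [Q]
        congr 1
        congr 1
        refine Finset.sum_congr rfl fun x' _ => ?_
        rw [(h1 (phi τ z (θ t z)) x').1]
      constructor
      · rw [hV, Jaux_succ]
        exact Finset.sum_congr rfl fun a _ => by rw [hQ]
      · intro σ
        rw [Jaux_succ, hV]
        calc ∑ a : A, ((σ t z x) a).toReal *
              (R x a z + δ * ∑ x' : X, ((τ x a z) x').toReal *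
                Jaux τ R δ θ σ n (t + 1) (phi τ z (θ t z)) x')
            ≤ ∑ a : A, ((σ t z x) a).toReal * Q τ R δ T θ t z x a (θ t z) := by
              refine Finset.sum_le_sum fun a _ => ?_
              refine mul_le_mul_of_nonneg_left ?_ ENNReal.toReal_nonneg
              rw [Q]
              refine add_le_add (le_refl _) ?_
              refine mul_le_mul_of_nonneg_left ?_ (le_of_lt hδ0)
              refine Finset.sum_le_sum fun x' _ => ?_
              exact mul_le_mul_of_nonneg_left ((h1 (phi τ z (θ t z)) x').2 σ)
                ENNReal.toReal_nonneg
          _ ≤ _ := hθ t ht1 (by omega) z x (σ t z x)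

/-- the value function is the optimal value of the single-agent control
problem against the equilibrium mean-field flow, and the supremum is attained by `θ`. -/
theorem V_is_optimal_value
    (τ : X → A → PMF X → PMF X) (R : X → A → PMF X → ℝ) (δ : ℝ)
    (hδ0 : 0 < δ) (hδ1 : δ ≤ 1) (T : ℕ) (hT : 1 ≤ T)
    (θ : ℕ → PMF X → X → PMF A) (hθ : IsFixedPoint τ R δ T θ)
    (t : ℕ) (ht1 : 1 ≤ t) (htT : t ≤ T) (z : PMF X) (x : X) :
    IsGreatest
      (Set.range fun σ : ℕ → PMF X → X → PMF A => J τ R δ T θ σ t z x)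
      (V τ R δ T θ t z x) ∧
    V τ R δ T θ t z x = J τ R δ T θ θ t z x := by
  have H := V_eq_and_le τ R δ hδ0 T θ hθ (T - t) t ht1 (by omega) z x
  refine ⟨⟨⟨θ, H.1.symm⟩, ?_⟩, H.1⟩
  rintro y ⟨σ, rfl⟩
  exact H.2 σ

end MFG
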